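/- Let α₂ = {9/50, 189/250} and V_2 = 821/28125. Then for each j ∈ {1,2,3}, ∫_{J_j} min_{a ∈ S_j(α₂)} (x − a)² dP(x) = V_2 / 75, where S_j(α₂) denotes the image of α₂ under S_j. -/

import Mathlib

open MeasureTheory Filter
open scoped ENNReal

noncomputable section

/-- The three contractive similarities `S j x = x/5 + 2 j/5` (indexing `j = 0,1,2`
corresponds to the paper's `j = 1,2,3`). -/
def S (j : Fin 3) : ℝ → ℝ := fun x => x / 5 + 2 * (j : ℝ) / 5

/-- For a word `σ ∈ {1,2,3}^k`, the composition `S_σ = S_{σ 0} ∘ ⋯ ∘ S_{σ (k-1)}`. -/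
def Sword {k : ℕ} (σ : Fin k → Fin 3) : ℝ → ℝ :=
  (List.ofFn fun i => S (σ i)).foldr (· ∘ ·) id

/-- The basic interval `J j = S j ([0,1])`. -/
def J (j : Fin 3) : Set ℝ := S j '' Set.Icc 0 1

/-- The interval `J_σ = S_σ([0,1])`. -/
def Jword {k : ℕ} (σ : Fin k → Fin 3) : Set ℝ := Sword σ '' Set.Icc 0 1

/-- The distortion error `V(P; α) = ∫ min_{a ∈ α} (x - a)^2 dP(x)`. -/
def distortion (P : Measure ℝ) (α : Set ℝ) : ℝ :=
  ∫ x, (⨅ a : α, (x - (a : ℝ)) ^ 2) ∂P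

/-- The `n`-th quantization error
`V_n = inf { V(P; α) : α ⊂ ℝ finite, 1 ≤ card α ≤ n }`. -/
def quantErr (P : Measure ℝ) (n : ℕ) : ℝ :=
  sInf {e | ∃ α : Set ℝ, α.Finite ∧ α.Nonempty ∧ α.ncard ≤ n ∧ distortion P α = e}

/-- The self-similarity equation `P = (1/3)(P∘S₁⁻¹ + P∘S₂⁻¹ + P∘S₃⁻¹)`
characterizing the standard triadic Cantor distribution. -/
def IsTriadicCantor (P : Measure ℝ) : Prop :=
  P = (3 : ℝ≥0∞)⁻¹ • (P.map (S 0) + P.map (S 1) + P.map (S 2))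

/-! ### Auxiliary lemmas -/

lemma S_cont (j : Fin 3) : Continuous (S j) := by
  unfold S; fun_prop

lemma S_meas (j : Fin 3) : Measurable (S j) := (S_cont j).measurable

@[simp] lemma finv0 : ((0 : Fin 3) : ℝ) = 0 := by norm_num
@[simp] lemma finv1 : ((1 : Fin 3) : ℝ) = 1 := by norm_num
@[simp] lemma finv2 : ((2 : Fin 3) : ℝ) = 2 := by norm_num

lemma S_preim_Ioi (j : Fin 3) (t : ℝ) :
    S j ⁻¹' Set.Ioi t = Set.Ioi (5 * t - 2 * (j : ℝ)) := by
  ext x; simp only [S, Set.mem_preimage, Set.mem_Ioi]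
  constructor <;> intro h <;> linarith

lemma S_preim_Iio (j : Fin 3) (t : ℝ) :
    S j ⁻¹' Set.Iio t = Set.Iio (5 * t - 2 * (j : ℝ)) := by
  ext x; simp only [S, Set.mem_preimage, Set.mem_Iio]
  constructor <;> intro h <;> linarith

lemma S_preim_Iic (j : Fin 3) (t : ℝ) :
    S j ⁻¹' Set.Iic t = Set.Iic (5 * t - 2 * (j : ℝ)) := by
  ext x; simp only [S, Set.mem_preimage, Set.mem_Iic]
  constructor <;> intro h <;> linarith

lemma S_preim_Icc (j : Fin 3) (s t : ℝ) :
    S j ⁻¹' Set.Icc s t = Set.Icc (5 * s - 2 * (j : ℝ)) (5 * t - 2 * (j : ℝ)) := by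
  ext x; simp only [S, Set.mem_preimage, Set.mem_Icc]
  constructor <;> intro h <;> constructor <;> linarith [h.1, h.2]

section Cantor

variable (P : Measure ℝ) [IsProbabilityMeasure P] (hP : IsTriadicCantor P)

include hP in
lemma meas_eq {A : Set ℝ} (hA : MeasurableSet A) :
    P A = 3⁻¹ * (P (S 0 ⁻¹' A) + P (S 1 ⁻¹' A) + P (S 2 ⁻¹' A)) := by
  conv_lhs => rw [hP]
  simp [Measure.map_apply (S_meas _) hA]
  ring

include hP

lemma null_Ioi_one : P (Set.Ioi (1 : ℝ)) = 0 := by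
  -- step: for any t with 1 ≤ t we bound by the level 5t-4
  have step : ∀ t : ℝ, P (Set.Ioi t) ≤ P (Set.Ioi (5 * t - 4)) := by
    intro t
    rw [meas_eq P hP measurableSet_Ioi, S_preim_Ioi, S_preim_Ioi, S_preim_Ioi]
    have h0 : P (Set.Ioi (5 * t - 2 * ((0 : Fin 3) : ℝ))) ≤ P (Set.Ioi (5 * t - 4)) := by
      apply measure_mono; apply Set.Ioi_subset_Ioi
      simp only [finv0, finv1, finv2]; linarith
    have h1 : P (Set.Ioi (5 * t - 2 * ((1 : Fin 3) : ℝ))) ≤ P (Set.Ioi (5 * t - 4)) := by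
      apply measure_mono; apply Set.Ioi_subset_Ioi
      simp only [finv0, finv1, finv2]; linarith
    have h2 : P (Set.Ioi (5 * t - 2 * ((2 : Fin 3) : ℝ))) ≤ P (Set.Ioi (5 * t - 4)) := by
      apply measure_mono; apply Set.Ioi_subset_Ioi
      simp only [finv0, finv1, finv2]; linarith
    calc 3⁻¹ * (P (Set.Ioi (5 * t - 2 * ((0 : Fin 3) : ℝ)))
          + P (Set.Ioi (5 * t - 2 * ((1 : Fin 3) : ℝ)))
          + P (Set.Ioi (5 * t - 2 * ((2 : Fin 3) : ℝ))))
        ≤ 3⁻¹ * (P (Set.Ioi (5 * t - 4)) + P (Set.Ioi (5 * t - 4)) + P (Set.Ioi (5 * t - 4))) := by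
          gcongr
      _ = 3⁻¹ * (3 * P (Set.Ioi (5 * t - 4))) := by ring_nf
      _ = P (Set.Ioi (5 * t - 4)) := by
          rw [← mul_assoc, ENNReal.inv_mul_cancel (by norm_num) (by norm_num), one_mul]
  have chain : ∀ n : ℕ, P (Set.Ioi (2 : ℝ)) ≤ P (Set.Ioi ((5 : ℝ) ^ n + 1)) := by
    intro n
    induction n with
    | zero => norm_num
    | succ n ih =>
      refine ih.trans ((step ((5:ℝ)^n + 1)).trans (measure_mono (Set.Ioi_subset_Ioi ?_)))
      have : (1:ℝ) ≤ (5:ℝ)^n := one_le_pow₀ (by norm_num)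
      rw [pow_succ]; nlinarith
  have hiInter : (⋂ n, Set.Ioi ((5 : ℝ) ^ n + 1)) = ∅ := by
    ext x
    simp only [Set.mem_iInter, Set.mem_Ioi, Set.mem_empty_iff_false, iff_false, not_forall,
      not_lt]
    obtain ⟨n, hn⟩ := pow_unbounded_of_one_lt x (by norm_num : (1:ℝ) < 5)
    exact ⟨n, by linarith⟩
  have hT : Tendsto (fun n => P (Set.Ioi ((5 : ℝ) ^ n + 1))) atTop (nhds 0) := by
    have := tendsto_measure_iInter_atTop (μ := P)
      (s := fun n : ℕ => Set.Ioi ((5 : ℝ) ^ n + 1))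
      (fun n => measurableSet_Ioi.nullMeasurableSet)
      (fun m n hmn => Set.Ioi_subset_Ioi (by gcongr <;> norm_num))
      ⟨0, measure_ne_top _ _⟩
    rwa [hiInter, measure_empty] at this
  have h2 : P (Set.Ioi (2 : ℝ)) = 0 :=
    le_antisymm (ge_of_tendsto' hT chain) zero_le
  -- now conclude for Ioi 1
  have heq := meas_eq P hP (measurableSet_Ioi (a := (1:ℝ)))
  rw [S_preim_Ioi, S_preim_Ioi, S_preim_Ioi] at heq
  have h5 : P (Set.Ioi (5 * (1:ℝ) - 2 * ((0 : Fin 3) : ℝ))) = 0 := by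
    refine measure_mono_null (Set.Ioi_subset_Ioi ?_) h2; norm_num
  have h3 : P (Set.Ioi (5 * (1:ℝ) - 2 * ((1 : Fin 3) : ℝ))) = 0 := by
    refine measure_mono_null (Set.Ioi_subset_Ioi ?_) h2; norm_num
  have h1 : (5 * (1:ℝ) - 2 * ((2 : Fin 3) : ℝ)) = 1 := by norm_num
  rw [h5, h3, h1] at heq
  have h3a : (3 : ℝ≥0∞) * P (Set.Ioi (1:ℝ)) = P (Set.Ioi (1:ℝ)) := by
    nth_rewrite 1 [heq]
    rw [zero_add, zero_add, ← mul_assoc,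
      ENNReal.mul_inv_cancel (by norm_num) (by norm_num), one_mul]
  have hne : P (Set.Ioi (1:ℝ)) ≠ ⊤ := measure_ne_top _ _
  have := congrArg ENNReal.toReal h3a
  rw [ENNReal.toReal_mul] at this
  have h30 : ((3 : ℝ≥0∞)).toReal = 3 := by norm_num
  rw [h30] at this
  have : (P (Set.Ioi (1:ℝ))).toReal = 0 := by linarith
  rcases (ENNReal.toReal_eq_zero_iff _).mp this with h | h
  · exact h
  · exact absurd h hne

lemma null_Iio_zero : P (Set.Iio (0 : ℝ)) = 0 := by
  have step : ∀ t : ℝ, P (Set.Iio t) ≤ P (Set.Iio (5 * t)) := by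
    intro t
    rw [meas_eq P hP measurableSet_Iio, S_preim_Iio, S_preim_Iio, S_preim_Iio]
    have h0 : P (Set.Iio (5 * t - 2 * ((0 : Fin 3) : ℝ))) ≤ P (Set.Iio (5 * t)) := by
      apply measure_mono; apply Set.Iio_subset_Iio
      simp only [finv0, finv1, finv2]; linarith
    have h1 : P (Set.Iio (5 * t - 2 * ((1 : Fin 3) : ℝ))) ≤ P (Set.Iio (5 * t)) := by
      apply measure_mono; apply Set.Iio_subset_Iio
      simp only [finv0, finv1, finv2]; linarith
    have h2 : P (Set.Iio (5 * t - 2 * ((2 : Fin 3) : ℝ))) ≤ P (Set.Iio (5 * t)) := by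
      apply measure_mono; apply Set.Iio_subset_Iio
      simp only [finv0, finv1, finv2]; linarith
    calc 3⁻¹ * (P (Set.Iio (5 * t - 2 * ((0 : Fin 3) : ℝ)))
          + P (Set.Iio (5 * t - 2 * ((1 : Fin 3) : ℝ)))
          + P (Set.Iio (5 * t - 2 * ((2 : Fin 3) : ℝ))))
        ≤ 3⁻¹ * (P (Set.Iio (5 * t)) + P (Set.Iio (5 * t)) + P (Set.Iio (5 * t))) := by
          gcongr
      _ = 3⁻¹ * (3 * P (Set.Iio (5 * t))) := by ring_nf
      _ = P (Set.Iio (5 * t)) := by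
          rw [← mul_assoc, ENNReal.inv_mul_cancel (by norm_num) (by norm_num), one_mul]
  have chain : ∀ n : ℕ, P (Set.Iio (-1 : ℝ)) ≤ P (Set.Iio (-(5 : ℝ) ^ n)) := by
    intro n
    induction n with
    | zero => norm_num
    | succ n ih =>
      refine ih.trans ?_
      have h := step (-(5:ℝ)^n)
      rw [show (5:ℝ) * (-(5:ℝ)^n) = -(5:ℝ)^(n+1) by rw [pow_succ]; ring] at h
      exact h
  have hiInter : (⋂ n, Set.Iio (-(5 : ℝ) ^ n)) = ∅ := by
    ext x
    simp only [Set.mem_iInter, Set.mem_Iio, Set.mem_empty_iff_false, iff_false, not_forall,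
      not_lt]
    obtain ⟨n, hn⟩ := pow_unbounded_of_one_lt (-x) (by norm_num : (1:ℝ) < 5)
    exact ⟨n, by linarith⟩
  have hT : Tendsto (fun n => P (Set.Iio (-(5 : ℝ) ^ n))) atTop (nhds 0) := by
    have := tendsto_measure_iInter_atTop (μ := P)
      (s := fun n : ℕ => Set.Iio (-(5 : ℝ) ^ n))
      (fun n => measurableSet_Iio.nullMeasurableSet)
      (fun m n hmn => Set.Iio_subset_Iio (by
        have : (5:ℝ)^m ≤ (5:ℝ)^n := by gcongr <;> norm_num
        linarith))
      ⟨0, measure_ne_top _ _⟩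
    rwa [hiInter, measure_empty] at this
  have hm1 : P (Set.Iio (-1 : ℝ)) = 0 :=
    le_antisymm (ge_of_tendsto' hT chain) zero_le
  have heq := meas_eq P hP (measurableSet_Iio (a := (0:ℝ)))
  rw [S_preim_Iio, S_preim_Iio, S_preim_Iio] at heq
  have h2 : P (Set.Iio (5 * (0:ℝ) - 2 * ((1 : Fin 3) : ℝ))) = 0 := by
    refine measure_mono_null (Set.Iio_subset_Iio ?_) hm1; norm_num
  have h4 : P (Set.Iio (5 * (0:ℝ) - 2 * ((2 : Fin 3) : ℝ))) = 0 := by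
    refine measure_mono_null (Set.Iio_subset_Iio ?_) hm1; norm_num
  have h0 : (5 * (0:ℝ) - 2 * ((0 : Fin 3) : ℝ)) = 0 := by norm_num
  rw [h2, h4, h0] at heq
  have h3a : (3 : ℝ≥0∞) * P (Set.Iio (0:ℝ)) = P (Set.Iio (0:ℝ)) := by
    nth_rewrite 1 [heq]
    rw [add_zero, add_zero, ← mul_assoc,
      ENNReal.mul_inv_cancel (by norm_num) (by norm_num), one_mul]
  have hne : P (Set.Iio (0:ℝ)) ≠ ⊤ := measure_ne_top _ _
  have := congrArg ENNReal.toReal h3a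
  rw [ENNReal.toReal_mul] at this
  have h30 : ((3 : ℝ≥0∞)).toReal = 3 := by norm_num
  rw [h30] at this
  have : (P (Set.Iio (0:ℝ))).toReal = 0 := by linarith
  rcases (ENNReal.toReal_eq_zero_iff _).mp this with h | h
  · exact h
  · exact absurd h hne

lemma null_of_out {A : Set ℝ} (h : A ⊆ Set.Iio 0 ∪ Set.Ioi 1) : P A = 0 :=
  measure_mono_null h
    (measure_union_null (null_Iio_zero P hP) (null_Ioi_one P hP))

lemma ae_mem_Icc : ∀ᵐ x ∂P, x ∈ Set.Icc (0:ℝ) 1 := by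
  rw [MeasureTheory.ae_iff]
  apply null_of_out P hP
  intro x hx
  simp only [Set.mem_Icc, not_and, not_le, Set.mem_setOf_eq] at hx
  simp only [Set.mem_union, Set.mem_Iio, Set.mem_Ioi]
  by_cases h : x < 0
  · exact Or.inl h
  · exact Or.inr (hx (le_of_not_gt h))

lemma restrict_full {A : Set ℝ} (h : Set.Icc (0:ℝ) 1 ⊆ A) : P.restrict A = P :=
  Measure.restrict_eq_self_of_ae_mem ((ae_mem_Icc P hP).mono fun x hx => h hx)

lemma integrable_cont {f : ℝ → ℝ} (hf : Continuous f) : Integrable f P := by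
  rw [← restrict_full P hP (subset_refl _)]
  exact hf.continuousOn.integrableOn_compact isCompact_Icc

lemma setInt_full {f : ℝ → ℝ} {A : Set ℝ} (h : Set.Icc (0:ℝ) 1 ⊆ A) :
    ∫ x in A, f x ∂P = ∫ x, f x ∂P := by
  rw [restrict_full P hP h]

lemma setInt_null {f : ℝ → ℝ} {A : Set ℝ} (h : A ⊆ Set.Iio 0 ∪ Set.Ioi 1) :
    ∫ x in A, f x ∂P = 0 := by
  rw [Measure.restrict_eq_zero.mpr (null_of_out P hP h), integral_zero_measure]

lemma transfer {f : ℝ → ℝ} (hf : Continuous f) {A : Set ℝ} (hA : MeasurableSet A) :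
    ∫ x in A, f x ∂P = (3:ℝ)⁻¹ * ((∫ x in S 0 ⁻¹' A, f (S 0 x) ∂P)
      + (∫ x in S 1 ⁻¹' A, f (S 1 x) ∂P) + (∫ x in S 2 ⁻¹' A, f (S 2 x) ∂P)) := by
  have hmap : ∀ i : Fin 3, Integrable f (Measure.map (S i) P) := fun i =>
    (integrable_map_measure hf.aestronglyMeasurable (S_meas i).aemeasurable).mpr
      (integrable_cont P hP (hf.comp (S_cont i)))
  have h0 := (hmap 0).integrableOn (s := A)
  have h1 := (hmap 1).integrableOn (s := A)
  have h2 := (hmap 2).integrableOn (s := A)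
  conv_lhs => rw [hP]
  rw [Measure.restrict_smul, integral_smul_measure, Measure.restrict_add,
    integral_add_measure (h0.add_measure h1) h2, Measure.restrict_add,
    integral_add_measure h0 h1,
    setIntegral_map hA hf.aestronglyMeasurable (S_meas 0).aemeasurable,
    setIntegral_map hA hf.aestronglyMeasurable (S_meas 1).aemeasurable,
    setIntegral_map hA hf.aestronglyMeasurable (S_meas 2).aemeasurable]
  have h3 : ((3 : ℝ≥0∞)⁻¹).toReal = (3:ℝ)⁻¹ := by
    rw [ENNReal.toReal_inv]; norm_num
  rw [h3, smul_eq_mul]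

lemma transfer' {f : ℝ → ℝ} (hf : Continuous f) :
    ∫ x, f x ∂P = (3:ℝ)⁻¹ * ((∫ x, f (S 0 x) ∂P)
      + (∫ x, f (S 1 x) ∂P) + (∫ x, f (S 2 x) ∂P)) := by
  have h := transfer P hP hf MeasurableSet.univ
  simpa using h

lemma integral_affine (r c : ℝ) : ∫ x, (r * x + c) ∂P = r * (∫ x, x ∂P) + c := by
  have h1 : Integrable (fun x : ℝ => r * x) P := integrable_cont P hP (by fun_prop)
  rw [integral_add h1 (integrable_const c), integral_const_mul _ _, integral_const]
  simp

lemma m1_eq : ∫ x, x ∂P = 1/2 := by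
  have h := transfer' P hP continuous_id
  simp only [id_eq] at h
  have hS : ∀ i : Fin 3, ∫ x, S i x ∂P = (1/5) * (∫ x, x ∂P) + 2*(i:ℝ)/5 := by
    intro i
    have heq : (fun x => S i x) = fun x => (1/5) * x + 2*(i:ℝ)/5 := by
      funext x; simp [S]; ring
    rw [show (∫ x, S i x ∂P) = ∫ x, ((1/5) * x + 2*(i:ℝ)/5) ∂P from by rw [← heq],
      integral_affine P hP]
  rw [hS 0, hS 1, hS 2] at h
  simp only [finv0, finv1, finv2] at h
  linarith

lemma integral_affine_sq (r c : ℝ) :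
    ∫ x, (r * x + c)^2 ∂P = r^2 * (∫ x, x^2 ∂P) + r*c + c^2 := by
  have hexp : (fun x : ℝ => (r*x+c)^2) = fun x => r^2 * x^2 + ((2*r*c) * x + c^2) := by
    funext x; ring
  rw [show (∫ x, (r * x + c)^2 ∂P) = ∫ x, (r^2 * x^2 + ((2*r*c) * x + c^2)) ∂P from by
      rw [← hexp],
    integral_add (integrable_cont P hP (by fun_prop : Continuous fun x : ℝ => r^2 * x^2))
      (integrable_cont P hP (by fun_prop : Continuous fun x : ℝ => 2*r*c*x + c^2)),
    integral_add (integrable_cont P hP (by fun_prop : Continuous fun x : ℝ => 2*r*c*x))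
      (integrable_const _),
    integral_const_mul _ _, integral_const_mul _ _, integral_const, m1_eq P hP]
  simp
  ring

lemma m2_eq : ∫ x, x^2 ∂P = 13/36 := by
  have h := transfer' P hP (by fun_prop : Continuous (fun x : ℝ => x^2))
  have hS : ∀ i : Fin 3, ∫ x, (S i x)^2 ∂P
      = (1/5)^2 * (∫ x, x^2 ∂P) + (1/5)*(2*(i:ℝ)/5) + (2*(i:ℝ)/5)^2 := by
    intro i
    have heq : (fun x => (S i x)^2) = fun x => ((1/5) * x + 2*(i:ℝ)/5)^2 := by
      funext x; simp [S]; ring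
    rw [show (∫ x, (S i x)^2 ∂P) = ∫ x, ((1/5) * x + 2*(i:ℝ)/5)^2 ∂P from by rw [← heq],
      integral_affine_sq P hP]
  rw [hS 0, hS 1, hS 2] at h
  simp only [finv0, finv1, finv2] at h
  linarith

end Cantor

section Cantor2

variable (P : Measure ℝ) [IsProbabilityMeasure P] (hP : IsTriadicCantor P)

include hP

lemma V_eq : ∫ x, min ((x - 9/50)^2) ((x - 189/250)^2) ∂P = 821/28125 := by
  have hcont : Continuous (fun x : ℝ => min ((x - 9/50)^2) ((x - 189/250)^2)) := by fun_prop
  have hsq : ∀ r c : ℝ, ∫ x, (r * x + c)^2 ∂P = r^2 * (13/36) + r*c + c^2 := by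
    intro r c; rw [integral_affine_sq P hP, m2_eq P hP]
  have ev : ∀ (g : ℝ → ℝ) (r c : ℝ), (∀ x, g x = (r*x + c)^2) →
      ∫ x, g x ∂P = r^2*(13/36) + r*c + c^2 := by
    intro g r c hg
    calc ∫ x, g x ∂P = ∫ x, (r*x+c)^2 ∂P := by congr 1; funext x; exact hg x
      _ = _ := hsq r c
  -- splitting at the midpoint 117/250
  have hsplit : ∫ x, min ((x - 9/50)^2) ((x - 189/250)^2) ∂P
      = (∫ x in Set.Iic (117/250 : ℝ), min ((x - 9/50)^2) ((x - 189/250)^2) ∂P)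
        + ∫ x in Set.Ioi (117/250 : ℝ), min ((x - 9/50)^2) ((x - 189/250)^2) ∂P := by
    have h := integral_add_compl (measurableSet_Iic (a := (117/250:ℝ)))
      (integrable_cont P hP hcont)
    rw [Set.compl_Iic] at h
    exact h.symm
  have hleft : ∫ x in Set.Iic (117/250 : ℝ), min ((x - 9/50)^2) ((x - 189/250)^2) ∂P
      = ∫ x in Set.Iic (117/250 : ℝ), (x - 9/50)^2 ∂P := by
    apply setIntegral_congr_fun measurableSet_Iic
    intro x hx
    simp only [Set.mem_Iic] at hx
    apply min_eq_left
    nlinarith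
  have hright : ∫ x in Set.Ioi (117/250 : ℝ), min ((x - 9/50)^2) ((x - 189/250)^2) ∂P
      = ∫ x in Set.Ioi (117/250 : ℝ), (x - 189/250)^2 ∂P := by
    apply setIntegral_congr_fun measurableSet_Ioi
    intro x hx
    simp only [Set.mem_Ioi] at hx
    apply min_eq_right
    nlinarith
  -- first-level transfer for the left piece
  have t1 : ∫ x in Set.Iic (117/250:ℝ), (x - 9/50)^2 ∂P
      = (3:ℝ)⁻¹ * ((∫ x in Set.Iic (117/50:ℝ), (S 0 x - 9/50)^2 ∂P)
        + (∫ x in Set.Iic (17/50:ℝ), (S 1 x - 9/50)^2 ∂P)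
        + (∫ x in Set.Iic (-83/50:ℝ), (S 2 x - 9/50)^2 ∂P)) := by
    rw [transfer P hP (by fun_prop : Continuous fun x : ℝ => (x - 9/50)^2) measurableSet_Iic,
      S_preim_Iic, S_preim_Iic, S_preim_Iic]
    norm_num
  have f1 : ∫ x in Set.Iic (117/50:ℝ), (S 0 x - 9/50)^2 ∂P
      = ∫ x, (S 0 x - 9/50)^2 ∂P := by
    apply setInt_full P hP
    intro x hx
    rcases hx with ⟨h0x, h1x⟩
    simp only [Set.mem_Iic]; linarith
  have n1 : ∫ x in Set.Iic (-83/50:ℝ), (S 2 x - 9/50)^2 ∂P = 0 := by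
    apply setInt_null P hP
    intro x hx
    simp only [Set.mem_Iic] at hx
    simp only [Set.mem_union, Set.mem_Iio, Set.mem_Ioi]
    left; linarith
  -- second-level transfer for the left piece
  have t2 : ∫ x in Set.Iic (17/50:ℝ), (S 1 x - 9/50)^2 ∂P
      = (3:ℝ)⁻¹ * ((∫ x in Set.Iic (17/10:ℝ), (S 1 (S 0 x) - 9/50)^2 ∂P)
        + (∫ x in Set.Iic (-3/10:ℝ), (S 1 (S 1 x) - 9/50)^2 ∂P)
        + (∫ x in Set.Iic (-23/10:ℝ), (S 1 (S 2 x) - 9/50)^2 ∂P)) := by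
    rw [transfer P hP (show Continuous fun x : ℝ => (S 1 x - 9/50)^2 from ((S_cont 1).sub continuous_const).pow 2) measurableSet_Iic,
      S_preim_Iic, S_preim_Iic, S_preim_Iic]
    norm_num
  have f2 : ∫ x in Set.Iic (17/10:ℝ), (S 1 (S 0 x) - 9/50)^2 ∂P
      = ∫ x, (S 1 (S 0 x) - 9/50)^2 ∂P := by
    apply setInt_full P hP
    intro x hx; rcases hx with ⟨h0x, h1x⟩
    simp only [Set.mem_Iic]; linarith
  have n2 : ∫ x in Set.Iic (-3/10:ℝ), (S 1 (S 1 x) - 9/50)^2 ∂P = 0 := by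
    apply setInt_null P hP
    intro x hx
    simp only [Set.mem_Iic] at hx
    simp only [Set.mem_union, Set.mem_Iio, Set.mem_Ioi]
    left; linarith
  have n3 : ∫ x in Set.Iic (-23/10:ℝ), (S 1 (S 2 x) - 9/50)^2 ∂P = 0 := by
    apply setInt_null P hP
    intro x hx
    simp only [Set.mem_Iic] at hx
    simp only [Set.mem_union, Set.mem_Iio, Set.mem_Ioi]
    left; linarith
  -- first-level transfer for the right piece
  have t3 : ∫ x in Set.Ioi (117/250:ℝ), (x - 189/250)^2 ∂P
      = (3:ℝ)⁻¹ * ((∫ x in Set.Ioi (117/50:ℝ), (S 0 x - 189/250)^2 ∂P)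
        + (∫ x in Set.Ioi (17/50:ℝ), (S 1 x - 189/250)^2 ∂P)
        + (∫ x in Set.Ioi (-83/50:ℝ), (S 2 x - 189/250)^2 ∂P)) := by
    rw [transfer P hP (by fun_prop : Continuous fun x : ℝ => (x - 189/250)^2) measurableSet_Ioi,
      S_preim_Ioi, S_preim_Ioi, S_preim_Ioi]
    norm_num
  have n4 : ∫ x in Set.Ioi (117/50:ℝ), (S 0 x - 189/250)^2 ∂P = 0 := by
    apply setInt_null P hP
    intro x hx
    simp only [Set.mem_Ioi] at hx
    simp only [Set.mem_union, Set.mem_Iio, Set.mem_Ioi]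
    right; linarith
  have f3 : ∫ x in Set.Ioi (-83/50:ℝ), (S 2 x - 189/250)^2 ∂P
      = ∫ x, (S 2 x - 189/250)^2 ∂P := by
    apply setInt_full P hP
    intro x hx; rcases hx with ⟨h0x, h1x⟩
    simp only [Set.mem_Ioi]; linarith
  -- second-level transfer for the right piece
  have t4 : ∫ x in Set.Ioi (17/50:ℝ), (S 1 x - 189/250)^2 ∂P
      = (3:ℝ)⁻¹ * ((∫ x in Set.Ioi (17/10:ℝ), (S 1 (S 0 x) - 189/250)^2 ∂P)
        + (∫ x in Set.Ioi (-3/10:ℝ), (S 1 (S 1 x) - 189/250)^2 ∂P)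
        + (∫ x in Set.Ioi (-23/10:ℝ), (S 1 (S 2 x) - 189/250)^2 ∂P)) := by
    rw [transfer P hP (show Continuous fun x : ℝ => (S 1 x - 189/250)^2 from ((S_cont 1).sub continuous_const).pow 2) measurableSet_Ioi,
      S_preim_Ioi, S_preim_Ioi, S_preim_Ioi]
    norm_num
  have n5 : ∫ x in Set.Ioi (17/10:ℝ), (S 1 (S 0 x) - 189/250)^2 ∂P = 0 := by
    apply setInt_null P hP
    intro x hx
    simp only [Set.mem_Ioi] at hx
    simp only [Set.mem_union, Set.mem_Iio, Set.mem_Ioi]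
    right; linarith
  have f4 : ∫ x in Set.Ioi (-3/10:ℝ), (S 1 (S 1 x) - 189/250)^2 ∂P
      = ∫ x, (S 1 (S 1 x) - 189/250)^2 ∂P := by
    apply setInt_full P hP
    intro x hx; rcases hx with ⟨h0x, h1x⟩
    simp only [Set.mem_Ioi]; linarith
  have f5 : ∫ x in Set.Ioi (-23/10:ℝ), (S 1 (S 2 x) - 189/250)^2 ∂P
      = ∫ x, (S 1 (S 2 x) - 189/250)^2 ∂P := by
    apply setInt_full P hP
    intro x hx; rcases hx with ⟨h0x, h1x⟩
    simp only [Set.mem_Ioi]; linarith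
  -- evaluate the elementary integrals
  have E0 : ∫ x, (S 0 x - 9/50)^2 ∂P = (1/5:ℝ)^2*(13/36) + (1/5)*(-9/50) + (-9/50)^2 :=
    ev _ (1/5) (-9/50) (fun x => by simp [S]; ring)
  have E1 : ∫ x, (S 1 (S 0 x) - 9/50)^2 ∂P = (1/25:ℝ)^2*(13/36) + (1/25)*(11/50) + (11/50)^2 :=
    ev _ (1/25) (11/50) (fun x => by simp [S]; ring)
  have E2 : ∫ x, (S 1 (S 1 x) - 189/250)^2 ∂P
      = (1/25:ℝ)^2*(13/36) + (1/25)*(-69/250) + (-69/250)^2 :=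
    ev _ (1/25) (-69/250) (fun x => by simp [S]; ring)
  have E3 : ∫ x, (S 1 (S 2 x) - 189/250)^2 ∂P
      = (1/25:ℝ)^2*(13/36) + (1/25)*(-49/250) + (-49/250)^2 :=
    ev _ (1/25) (-49/250) (fun x => by simp [S]; ring)
  have E4 : ∫ x, (S 2 x - 189/250)^2 ∂P = (1/5:ℝ)^2*(13/36) + (1/5)*(11/250) + (11/250)^2 :=
    ev _ (1/5) (11/250) (fun x => by simp [S]; ring)
  rw [hsplit, hleft, hright, t1, f1, n1, t2, f2, n2, n3, t3, n4, f3, t4, n5, f4, f5,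
    E0, E1, E2, E3, E4]
  norm_num

end Cantor2

/-- The infimum over a two-point set is a minimum. -/
lemma inf_pair (p q x : ℝ) :
    (⨅ a : (({p, q} : Set ℝ)), (x - (a : ℝ))^2) = min ((x-p)^2) ((x-q)^2) := by
  have hbdd : BddBelow (Set.range fun a : (({p, q} : Set ℝ)) => (x - (a : ℝ))^2) := by
    refine ⟨0, ?_⟩
    rintro y ⟨a, rfl⟩
    positivity
  apply le_antisymm
  · apply le_min
    · exact ciInf_le hbdd ⟨p, by simp⟩
    · exact ciInf_le hbdd ⟨q, by simp⟩
  · apply le_ciInf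
    rintro ⟨a, ha⟩
    rcases ha with rfl | ha
    · exact min_le_left _ _
    · rw [Set.mem_singleton_iff] at ha
      subst ha
      exact min_le_right _ _

lemma J_eq (j : Fin 3) : J j = Set.Icc (2*(j:ℝ)/5) ((2*(j:ℝ)+1)/5) := by
  unfold J
  ext y
  constructor
  · rintro ⟨x, ⟨h0x, h1x⟩, rfl⟩
    simp only [S, Set.mem_Icc]
    constructor <;> linarith
  · intro hy
    rcases hy with ⟨h0y, h1y⟩
    refine ⟨5*y - 2*(j:ℝ), ⟨by linarith, by linarith⟩, ?_⟩
    simp only [S]; ring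

theorem stmt7 (P : Measure ℝ) [IsProbabilityMeasure P] (hP : IsTriadicCantor P)
    (j : Fin 3) :
    ∫ x in J j, (⨅ a : (S j '' ({9 / 50, 189 / 250} : Set ℝ)), (x - (a : ℝ)) ^ 2) ∂P
      = (821 / 28125) / 75 := by
  have hmin : ∫ x in J j, (⨅ a : (S j '' ({9 / 50, 189 / 250} : Set ℝ)), (x - (a : ℝ)) ^ 2) ∂P
      = ∫ x in J j, min ((x - S j (9/50))^2) ((x - S j (189/250))^2) ∂P := by
    congr 1
    funext x
    rw [Set.image_pair]
    exact inf_pair _ _ x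
  rw [hmin, J_eq]
  have hcontm : Continuous (fun x : ℝ => min ((x - S j (9/50))^2) ((x - S j (189/250))^2)) := by
    fun_prop
  have hkey : (fun x => min ((S j x - S j (9/50))^2) ((S j x - S j (189/250))^2))
      = fun x => (25:ℝ)⁻¹ * min ((x - 9/50)^2) ((x - 189/250)^2) := by
    funext x
    have h1 : (S j x - S j (9/50))^2 = (25:ℝ)⁻¹ * (x - 9/50)^2 := by simp only [S]; ring
    have h2 : (S j x - S j (189/250))^2 = (25:ℝ)⁻¹ * (x - 189/250)^2 := by
      simp only [S]; ring
    rw [h1, h2]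
    have hmono : Monotone (fun t : ℝ => (25:ℝ)⁻¹ * t) := fun a b hab => by
      dsimp; nlinarith
    exact (hmono.map_min).symm
  have hdiag : ∫ x in Set.Icc (0:ℝ) 1, min ((S j x - S j (9/50))^2) ((S j x - S j (189/250))^2) ∂P
      = (25:ℝ)⁻¹ * (821/28125) := by
    rw [setInt_full P hP (subset_refl _)]
    calc ∫ x, min ((S j x - S j (9/50))^2) ((S j x - S j (189/250))^2) ∂P
        = ∫ x, (25:ℝ)⁻¹ * min ((x - 9/50)^2) ((x - 189/250)^2) ∂P :=
          congrArg (fun f => ∫ x, f x ∂P) hkey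
      _ = (25:ℝ)⁻¹ * ∫ x, min ((x - 9/50)^2) ((x - 189/250)^2) ∂P := by
          rw [integral_const_mul _ _]
      _ = (25:ℝ)⁻¹ * (821/28125) := by rw [V_eq P hP]
  rw [transfer P hP hcontm (measurableSet_Icc), S_preim_Icc, S_preim_Icc, S_preim_Icc]
  fin_cases j
  · -- j = 0 : preimages Icc 0 1, Icc (-2) (-1), Icc (-4) (-3)
    norm_num
    have hd : ∫ (x : ℝ) in Set.Icc (0:ℝ) 1,
        min ((S 0 x - S 0 (9/50))^2) ((S 0 x - S 0 (189/250))^2) ∂P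
        = (25:ℝ)⁻¹ * (821/28125) := hdiag
    have hn1 : ∫ (x : ℝ) in Set.Icc (-2:ℝ) (-1),
        min ((S 1 x - S 0 (9/50))^2) ((S 1 x - S 0 (189/250))^2) ∂P = 0 := by
      apply setInt_null P hP
      intro x hx; rcases hx with ⟨h0x, h1x⟩
      simp only [Set.mem_union, Set.mem_Iio, Set.mem_Ioi]; left; linarith
    have hn2 : ∫ (x : ℝ) in Set.Icc (-4:ℝ) (-3),
        min ((S 2 x - S 0 (9/50))^2) ((S 2 x - S 0 (189/250))^2) ∂P = 0 := by
      apply setInt_null P hP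
      intro x hx; rcases hx with ⟨h0x, h1x⟩
      simp only [Set.mem_union, Set.mem_Iio, Set.mem_Ioi]; left; linarith
    rw [hd, hn1, hn2]
    norm_num
  · -- j = 1 : preimages Icc 2 3, Icc 0 1, Icc (-2) (-1)
    norm_num
    have hd : ∫ (x : ℝ) in Set.Icc (0:ℝ) 1,
        min ((S 1 x - S 1 (9/50))^2) ((S 1 x - S 1 (189/250))^2) ∂P
        = (25:ℝ)⁻¹ * (821/28125) := hdiag
    have hn1 : ∫ (x : ℝ) in Set.Icc (2:ℝ) 3,
        min ((S 0 x - S 1 (9/50))^2) ((S 0 x - S 1 (189/250))^2) ∂P = 0 := by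
      apply setInt_null P hP
      intro x hx; rcases hx with ⟨h0x, h1x⟩
      simp only [Set.mem_union, Set.mem_Iio, Set.mem_Ioi]; right; linarith
    have hn2 : ∫ (x : ℝ) in Set.Icc (-2:ℝ) (-1),
        min ((S 2 x - S 1 (9/50))^2) ((S 2 x - S 1 (189/250))^2) ∂P = 0 := by
      apply setInt_null P hP
      intro x hx; rcases hx with ⟨h0x, h1x⟩
      simp only [Set.mem_union, Set.mem_Iio, Set.mem_Ioi]; left; linarith
    rw [hd, hn1, hn2]
    norm_num
  · -- j = 2 : preimages Icc 4 5, Icc 2 3, Icc 0 1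
    norm_num
    simp only [show (⟨2, by norm_num⟩ : Fin 3) = 2 from rfl]
    have hd : ∫ (x : ℝ) in Set.Icc (0:ℝ) 1,
        min ((S 2 x - S 2 (9/50))^2) ((S 2 x - S 2 (189/250))^2) ∂P
        = (25:ℝ)⁻¹ * (821/28125) := hdiag
    have hn1 : ∫ (x : ℝ) in Set.Icc (4:ℝ) 5,
        min ((S 0 x - S 2 (9/50))^2) ((S 0 x - S 2 (189/250))^2) ∂P = 0 := by
      apply setInt_null P hP
      intro x hx; rcases hx with ⟨h0x, h1x⟩
      simp only [Set.mem_union, Set.mem_Iio, Set.mem_Ioi]; right; linarith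
    have hn2 : ∫ (x : ℝ) in Set.Icc (2:ℝ) 3,
        min ((S 1 x - S 2 (9/50))^2) ((S 1 x - S 2 (189/250))^2) ∂P = 0 := by
      apply setInt_null P hP
      intro x hx; rcases hx with ⟨h0x, h1x⟩
      simp only [Set.mem_union, Set.mem_Iio, Set.mem_Ioi]; right; linarith
    rw [hd, hn1, hn2]
    norm_num
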